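/- Let f : ℝⁿ → ℝ be differentiable with L-Lipschitz gradient, bounded below by f*. For gradient descent with 0 < η ≤ 1/L, the sum of squared gradient norms is summable: Σ_{t=0}^{∞} ‖∇f(wₜ)‖² ≤ 2(f(w₀) - f*)/η, and hence ‖∇f(wₜ)‖ → 0. -/

import Mathlib

open Filter

lemma descent_lemma {n : ℕ} (f : EuclideanSpace ℝ (Fin n) → ℝ)
    (hf : Differentiable ℝ f) (L : ℝ) (hL : 0 ≤ L)
    (hlip : LipschitzWith (Real.toNNReal L) (gradient f))
    (x v : EuclideanSpace ℝ (Fin n)) :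
    f (x + v) ≤ f x + inner ℝ (gradient f x) v + L / 2 * ‖v‖ ^ 2 := by
  set g : EuclideanSpace ℝ (Fin n) → EuclideanSpace ℝ (Fin n) := gradient f
  set φ : ℝ → ℝ := fun t =>
    f (x + t • v) - t * inner ℝ (g x) v - L / 2 * ‖v‖ ^ 2 * t ^ 2 with hφ
  have hderiv : ∀ t : ℝ, HasDerivAt φ
      ((inner ℝ (g (x + t • v)) v : ℝ) - inner ℝ (g x) v - L * ‖v‖ ^ 2 * t) t := by
    intro t
    have hcurve : HasDerivAt (fun t : ℝ => x + t • v) v t := by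
      simpa using ((hasDerivAt_id t).smul_const v).const_add x
    have hgrad := (hf (x + t • v)).hasGradientAt
    have hcomp : HasDerivAt (fun t : ℝ => f (x + t • v))
        ((inner ℝ (g (x + t • v)) v : ℝ)) t := by
      have := (hgrad.hasFDerivAt.comp_hasDerivAt t hcurve)
      rw [InnerProductSpace.toDual_apply_apply] at this; exact this
    have h2 : HasDerivAt (fun t : ℝ => t * (inner ℝ (g x) v : ℝ))
        ((inner ℝ (g x) v : ℝ)) t := by
      simpa using (hasDerivAt_id t).mul_const (inner ℝ (g x) v : ℝ)
    have h3 : HasDerivAt (fun t : ℝ => L / 2 * ‖v‖ ^ 2 * t ^ 2)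
        (L * ‖v‖ ^ 2 * t) t := by
      have := (hasDerivAt_pow 2 t).const_mul (L / 2 * ‖v‖ ^ 2)
      exact this.congr_deriv (by norm_num; ring)
    exact (hcomp.sub h2).sub h3
  have hcont : ContinuousOn φ (Set.Icc 0 1) :=
    (fun t _ => ((hderiv t).differentiableAt.continuousAt).continuousWithinAt)
  have hanti : AntitoneOn φ (Set.Icc (0:ℝ) 1) := by
    apply antitoneOn_of_deriv_nonpos (convex_Icc 0 1) hcont
    · intro t ht
      exact ((hderiv t).differentiableAt).differentiableWithinAt
    · intro t ht
      rw [interior_Icc] at ht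
      rw [(hderiv t).deriv]
      have hip : (inner ℝ (g (x + t • v)) v : ℝ) - inner ℝ (g x) v
          = inner ℝ (g (x + t • v) - g x) v := by rw [inner_sub_left]
      rw [hip]
      have h1 : (inner ℝ (g (x + t • v) - g x) v : ℝ)
          ≤ ‖g (x + t • v) - g x‖ * ‖v‖ := real_inner_le_norm _ _
      have h2 : ‖g (x + t • v) - g x‖ ≤ L * (t * ‖v‖) := by
        have := hlip.dist_le_mul (x + t • v) x
        rw [dist_eq_norm, dist_eq_norm] at this
        have hc : Real.toNNReal L = (L : ℝ) := Real.coe_toNNReal L hL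
        calc ‖g (x + t • v) - g x‖ ≤ L * ‖x + t • v - x‖ := by
              simpa [hc] using this
          _ = L * (t * ‖v‖) := by
              rw [add_sub_cancel_left, norm_smul]
              simp [abs_of_nonneg ht.1.le, Real.norm_eq_abs]
      nlinarith [norm_nonneg v, ht.1.le, norm_nonneg (g (x + t • v) - g x)]
  have := hanti (Set.left_mem_Icc.2 zero_le_one) (Set.right_mem_Icc.2 zero_le_one)
    zero_le_one
  simp only [hφ, one_smul, zero_smul, add_zero, zero_mul, one_pow, one_mul,
    mul_zero, sub_zero] at this
  linarith

theorem grad_norm_summable {n : ℕ} (f : EuclideanSpace ℝ (Fin n) → ℝ)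
    (hf : Differentiable ℝ f) (L : ℝ) (hL : 0 < L)
    (hlip : LipschitzWith (Real.toNNReal L) (gradient f))
    (fstar : ℝ) (hbound : ∀ x, f x ≥ fstar)
    (η : ℝ) (hη : 0 < η) (hηL : η ≤ 1 / L)
    (w : ℕ → EuclideanSpace ℝ (Fin n))
    (hrec : ∀ t, w (t + 1) = w t - η • gradient f (w t)) :
    Summable (fun t => ‖gradient f (w t)‖ ^ 2) ∧
    (∑' t : ℕ, ‖gradient f (w t)‖ ^ 2) ≤ 2 * (f (w 0) - fstar) / η ∧
    Tendsto (fun t => ‖gradient f (w t)‖) atTop (nhds 0) := by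
  set g : EuclideanSpace ℝ (Fin n) → EuclideanSpace ℝ (Fin n) := gradient f
  have hηL' : η * L ≤ 1 := by
    rw [le_div_iff₀ hL] at hηL; linarith
  have key : ∀ t, f (w (t + 1)) ≤ f (w t) - η / 2 * ‖g (w t)‖ ^ 2 := by
    intro t
    have := descent_lemma f hf L hL.le hlip (w t) (-(η • g (w t)))
    have hip : (inner ℝ (g (w t)) (-(η • g (w t))) : ℝ) = -(η * ‖g (w t)‖ ^ 2) := by
      rw [inner_neg_right, real_inner_smul_right, real_inner_self_eq_norm_sq]
    have hnr : ‖-(η • g (w t))‖ ^ 2 = η ^ 2 * ‖g (w t)‖ ^ 2 := by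
      rw [norm_neg, norm_smul, mul_pow, Real.norm_eq_abs, sq_abs]
    rw [hip, hnr] at this
    have hw : w (t + 1) = w t + -(η • g (w t)) := by
      rw [hrec t]; abel
    rw [hw]
    have hsq : (0:ℝ) ≤ ‖g (w t)‖ ^ 2 := sq_nonneg _
    nlinarith
  have psum : ∀ T, ∑ t ∈ Finset.range T, ‖g (w t)‖ ^ 2 ≤ 2 * (f (w 0) - fstar) / η := by
    intro T
    have h1 : η / 2 * ∑ t ∈ Finset.range T, ‖g (w t)‖ ^ 2 ≤ f (w 0) - f (w T) := by
      induction T with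
      | zero => simp
      | succ T ih =>
        rw [Finset.sum_range_succ, mul_add]
        have := key T
        linarith
    have h2 : f (w T) ≥ fstar := hbound _
    rw [le_div_iff₀ hη]
    nlinarith [h1, h2]
  have hsummable : Summable (fun t => ‖g (w t)‖ ^ 2) :=
    summable_of_sum_range_le (fun t => sq_nonneg _) psum
  refine ⟨hsummable, Summable.tsum_le_of_sum_range_le hsummable psum, ?_⟩
  have h0 : Tendsto (fun t => ‖g (w t)‖ ^ 2) atTop (nhds 0) :=
    hsummable.tendsto_atTop_zero
  have h1 := h0.sqrt
  simp only [Real.sqrt_zero] at h1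
  have heq : (fun t => Real.sqrt (‖g (w t)‖ ^ 2)) = fun t => ‖g (w t)‖ := by
    funext t; exact Real.sqrt_sq (norm_nonneg _)
  rwa [heq] at h1
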